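/- For the Gaussian measurement model, the centroid condition simplifies to a_k = I_k^I / (I_k^I + I_k^II), i.e., the optimal representation point for a region equals the conditional mean of P₀ on that region divided by the total probability of the region. -/

import Mathlib

open MeasureTheory Set

noncomputable def gfun : ℝ → ℝ := fun x => Real.exp (-x ^ 2 / 2)

lemma gfun_cont : Continuous gfun := by
  unfold gfun; continuity

lemma gfun_integrable : Integrable gfun := by
  have : Integrable (fun x : ℝ => Real.exp (-(1/2 : ℝ) * x ^ 2)) :=
    integrable_exp_neg_mul_sq (by norm_num)
  convert this using 2 with x
  unfold gfun
  congr 1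
  ring

lemma gfun_pos (x : ℝ) : 0 < gfun x := Real.exp_pos _

/-- The tail integral has derivative `-gfun α`. -/
lemma tail_hasDerivAt (α : ℝ) :
    HasDerivAt (fun t => ∫ x in Set.Ioi t, gfun x) (-gfun α) α := by
  have hint : Integrable gfun := gfun_integrable
  have key : ∀ t : ℝ, (∫ x in Set.Ioi t, gfun x) =
      (∫ x, gfun x) - (∫ x in Set.Iic (0:ℝ), gfun x) - ∫ x in (0:ℝ)..t, gfun x := by
    intro t
    have h1 := intervalIntegral.integral_Iic_add_Ioi (b := t)
      hint.integrableOn hint.integrableOn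
    have h2 := intervalIntegral.integral_Iic_sub_Iic (a := (0:ℝ)) (b := t)
      hint.integrableOn hint.integrableOn
    linarith
  have hD : HasDerivAt (fun t => ∫ x in (0:ℝ)..t, gfun x) (gfun α) α :=
    intervalIntegral.integral_hasDerivAt_right hint.intervalIntegrable
      gfun_cont.aestronglyMeasurable.stronglyMeasurableAtFilter gfun_cont.continuousAt
  have := (hD.const_sub ((∫ x, gfun x) - (∫ x in Set.Iic (0:ℝ), gfun x)))
  refine this.congr_deriv ?_ |>.congr_of_eventuallyEq ?_ |>.congr_deriv rfl
  · ring
  · filter_upwards with t using key t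

/-- In the Gaussian measurement model, the centroid condition simplifies to
`a_k = I_k^I / (I_k^I + I_k^II)`. -/
theorem gaussian_centroid
    (μ σ c10 c01 : ℝ) (hμ : 0 < μ) (hσ : 0 < σ) (hc10 : 0 < c10) (hc01 : 0 < c01)
    (Q : ℝ → ℝ)
    (hQ : ∀ α, Q α = (1 / Real.sqrt (2 * Real.pi)) *
      ∫ x in Set.Ioi α, Real.exp (-x ^ 2 / 2))
    (pEI pEII : ℝ → ℝ)
    (hpEI : ∀ a, pEI a =
      Q (μ / (2 * σ) + (σ / μ) * Real.log (c10 * a / (c01 * (1 - a)))))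
    (hpEII : ∀ a, pEII a =
      Q (μ / (2 * σ) - (σ / μ) * Real.log (c10 * a / (c01 * (1 - a)))))
    (IkI IkII : ℝ) (hIkI : 0 < IkI) (hIkII : 0 < IkII)
    (ak : ℝ) (hak : ak ∈ Set.Ioo (0:ℝ) 1)
    (hcentroid : c10 * IkI * deriv pEI ak + c01 * IkII * deriv pEII ak = 0) :
    ak = IkI / (IkI + IkII) := by
  obtain ⟨hak0, hak1⟩ := hak
  set C : ℝ := Real.sqrt (2 * Real.pi) with hC
  have hCpos : 0 < C := Real.sqrt_pos.mpr (by positivity)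
  set m : ℝ := μ / (2 * σ) with hm
  set s : ℝ := σ / μ with hs
  have hspos : 0 < s := div_pos hσ hμ
  set u : ℝ → ℝ := fun a => c10 * a / (c01 * (1 - a)) with hudef
  have hupos : 0 < u ak := by
    apply div_pos (by positivity)
    have : 0 < 1 - ak := by linarith
    positivity
  have hune : u ak ≠ 0 := ne_of_gt hupos
  -- derivative of Q
  have hQd : ∀ α, HasDerivAt Q (-(1 / C * gfun α)) α := by
    intro α
    have h1 : HasDerivAt (fun t => (1 / C) * ∫ x in Set.Ioi t, gfun x)
        ((1 / C) * (-gfun α)) α := (tail_hasDerivAt α).const_mul (1 / C)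
    have heq : Q = fun t => (1 / C) * ∫ x in Set.Ioi t, gfun x := funext hQ
    rw [heq]
    convert h1 using 1; ring
  -- derivative of u
  set Dc : ℝ := c10 * c01 / (c01 * (1 - ak)) ^ 2 with hDc
  have hDcpos : 0 < Dc := by
    apply div_pos (by positivity)
    have : 0 < 1 - ak := by linarith
    positivity
  have hden : c01 * (1 - ak) ≠ 0 := by
    have : 0 < 1 - ak := by linarith
    positivity
  have hu1 : HasDerivAt (fun a : ℝ => c10 * a) c10 ak := by
    simpa using (hasDerivAt_id ak).const_mul c10
  have hu2 : HasDerivAt (fun a : ℝ => c01 * (1 - a)) (-c01) ak := by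
    have := ((hasDerivAt_id ak).const_sub 1).const_mul c01
    simpa using this
  have hu : HasDerivAt u Dc ak := by
    have h := hu1.div hu2 hden
    have e : (c10 * (c01 * (1 - ak)) - c10 * ak * -c01) / (c01 * (1 - ak)) ^ 2 = Dc := by
      rw [hDc]; congr 1; ring
    exact h.congr_deriv e
  -- derivative of log ∘ u
  set L' : ℝ := Dc / u ak with hL'
  have hL'pos : 0 < L' := div_pos hDcpos hupos
  have hL : HasDerivAt (fun a => Real.log (u a)) L' ak := hu.log hune
  set T : ℝ := Real.log (u ak) with hT
  set g1 : ℝ := m + s * T with hg1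
  set g2 : ℝ := m - s * T with hg2
  -- derivatives of pEI, pEII
  have hI1 : HasDerivAt (fun a => m + s * Real.log (u a)) (s * L') ak :=
    (hL.const_mul s).const_add m
  have hI2 : HasDerivAt (fun a => m - s * Real.log (u a)) (-(s * L')) ak :=
    (hL.const_mul s).const_sub m
  have hpI : HasDerivAt pEI (-(1 / C * gfun g1) * (s * L')) ak := by
    have heq : pEI = fun a => Q (m + s * Real.log (u a)) := funext hpEI
    rw [heq]
    exact (hQd g1).comp ak hI1
  have hpII : HasDerivAt pEII (-(1 / C * gfun g2) * (-(s * L'))) ak := by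
    have heq : pEII = fun a => Q (m - s * Real.log (u a)) := funext hpEII
    rw [heq]
    exact (hQd g2).comp ak hI2
  rw [hpI.deriv, hpII.deriv] at hcentroid
  -- simplify the centroid condition
  have hKpos : 0 < s * L' * C := by positivity
  have hA : (0:ℝ) < gfun g1 := gfun_pos g1
  have hB : (0:ℝ) < gfun g2 := gfun_pos g2
  have hmain : c10 * IkI * gfun g1 = c01 * IkII * gfun g2 := by
    have h2 : c10 * IkI * gfun g1 * (s * L' * C) = c01 * IkII * gfun g2 * (s * L' * C) := by
      have hCne : C ≠ 0 := ne_of_gt hCpos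
      field_simp at hcentroid
      linear_combination (-C) * hcentroid
    exact mul_right_cancel₀ (ne_of_gt hKpos) h2
  -- relate gfun g1 and gfun g2
  have hms : m * s = 1 / 2 := by
    rw [hm, hs]; field_simp
  have hexp : gfun g1 = gfun g2 * Real.exp (-T) := by
    unfold gfun
    rw [← Real.exp_add]
    congr 1
    have h : -g1 ^ 2 / 2 = -g2 ^ 2 / 2 + (-(2 * (m * s) * T)) := by
      rw [hg1, hg2]; ring
    rw [h, hms]; ring
  rw [hexp] at hmain
  -- exp(-T) = 1 / u ak
  have hexpT : Real.exp (-T) = 1 / u ak := by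
    rw [hT, Real.exp_neg, Real.exp_log hupos, one_div]
  rw [hexpT] at hmain
  -- cancel gfun g2
  have h3 : c10 * IkI * (1 / u ak) = c01 * IkII :=
    mul_right_cancel₀ (ne_of_gt hB)
      (show c10 * IkI * (1 / u ak) * gfun g2 = c01 * IkII * gfun g2 by
        linear_combination hmain)
  have h4 : c10 * IkI * (c01 * (1 - ak)) = c01 * IkII * (c10 * ak) := by
    have huak : u ak = c10 * ak / (c01 * (1 - ak)) := rfl
    rw [huak] at h3
    have hakne : (c10 : ℝ) * ak ≠ 0 := by positivity
    field_simp at h3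
    linear_combination (c10 * c01) * h3
  have h5 : IkI * (1 - ak) = IkII * ak :=
    mul_left_cancel₀ (mul_ne_zero hc10.ne' hc01.ne')
      (show c10 * c01 * (IkI * (1 - ak)) = c10 * c01 * (IkII * ak) by
        linear_combination h4)
  have hsum : IkI + IkII ≠ 0 := by positivity
  rw [eq_div_iff hsum]
  linear_combination -h5
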